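/- arXiv:2403.15344 — 8 statements merged into one kernel-verified Lean document; each statement's English description precedes it below -/
import Mathlib

section
/- Let T ≥ 2 be an integer, i₀ > 0 a real number, and i : ℝ → ℝ a function that is nonnegative, monotonically nondecreasing, convex, and differentiable on [0,∞). If x* ∈ ℝ^{T-1} is a minimizer of the cost C over the set of feasible vectors, then x*_k = 0 for every k with 2 ≤ k ≤ T−1; that is, the optimal exploration is either a lazy excitation or an immediate excitation. -/
/-- Partial information `D_t(x) = i₀ + ∑_{s=1}^{t} i(x_s)`. -/
noncomputable def Dinfo (i0 : ℝ) (i : ℝ → ℝ) (x : ℕ → ℝ) (t : ℕ) : ℝ :=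
  i0 + ∑ s ∈ Finset.Icc 1 t, i (x s)

/-- Cost `C(x) = ∑_{t=1}^{T-1} 1/D_t(x) + ∑_{t=1}^{T-1} x_t`. -/
noncomputable def cost (T : ℕ) (i0 : ℝ) (i : ℝ → ℝ) (x : ℕ → ℝ) : ℝ :=
  (∑ t ∈ Finset.Icc 1 (T - 1), 1 / Dinfo i0 i x t) + ∑ t ∈ Finset.Icc 1 (T - 1), x t

/-- Feasibility: `x_k ≥ 0` for `k = 1, …, T-1`. -/
def Feasible (T : ℕ) (x : ℕ → ℝ) : Prop :=
  ∀ k, 1 ≤ k → k ≤ T - 1 → 0 ≤ x k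

/-- Superadditivity of a convex function on `[0, ∞)` up to its value at `0`. -/
lemma superadd {i : ℝ → ℝ} (hconv : ConvexOn ℝ (Set.Ici 0) i)
    {a b : ℝ} (ha : 0 ≤ a) (hb : 0 ≤ b) : i a + i b ≤ i (a + b) + i 0 := by
  rcases eq_or_lt_of_le (add_nonneg ha hb) with h | h
  · have ha0 : a = 0 := by linarith
    have hb0 : b = 0 := by linarith
    simp [ha0, hb0]
  · have hab : a + b ≠ 0 := ne_of_gt h
    have h1 : i a ≤ (b / (a + b)) * i 0 + (a / (a + b)) * i (a + b) := by
      have e1 : (b / (a + b)) • (0 : ℝ) + (a / (a + b)) • (a + b) = a := by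
        simp [smul_eq_mul]
        field_simp
      have := hconv.2 (Set.mem_Ici.2 le_rfl) (Set.mem_Ici.2 h.le)
        (div_nonneg hb h.le) (div_nonneg ha h.le)
        (by field_simp; try ring)
      rw [e1] at this
      simpa [smul_eq_mul] using this
    have h2 : i b ≤ (a / (a + b)) * i 0 + (b / (a + b)) * i (a + b) := by
      have e1 : (a / (a + b)) • (0 : ℝ) + (b / (a + b)) • (a + b) = b := by
        simp [smul_eq_mul]
        field_simp
      have := hconv.2 (Set.mem_Ici.2 le_rfl) (Set.mem_Ici.2 h.le)
        (div_nonneg ha h.le) (div_nonneg hb h.le)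
        (by field_simp; try ring)
      rw [e1] at this
      simpa [smul_eq_mul] using this
    have hsum : b / (a + b) + a / (a + b) = 1 := by
      rw [← add_div]
      field_simp
      ring
    calc i a + i b
        ≤ ((b / (a + b)) * i 0 + (a / (a + b)) * i (a + b))
          + ((a / (a + b)) * i 0 + (b / (a + b)) * i (a + b)) := add_le_add h1 h2
      _ = (b / (a + b) + a / (a + b)) * i 0
          + (b / (a + b) + a / (a + b)) * i (a + b) := by ring
      _ = i (a + b) + i 0 := by rw [hsum]; ring

theorem lazy_or_immediate (T : ℕ) (hT : 2 ≤ T) (i0 : ℝ) (hi0 : 0 < i0) (i : ℝ → ℝ)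
    (hnonneg : ∀ y, 0 ≤ y → 0 ≤ i y)
    (hmono : ∀ a b, 0 ≤ a → a ≤ b → i a ≤ i b)
    (hconv : ConvexOn ℝ (Set.Ici 0) i)
    (hdiff : DifferentiableOn ℝ i (Set.Ici 0))
    (xs : ℕ → ℝ) (hfeas : Feasible T xs)
    (hmin : ∀ x, Feasible T x → cost T i0 i xs ≤ cost T i0 i x) :
    ∀ k, 2 ≤ k → k ≤ T - 1 → xs k = 0 := by
  intro k hk2 hkT
  by_contra hne
  have hk1 : (1 : ℕ) ≤ k := by omega
  have hεpos : 0 < xs k := lt_of_le_of_ne (hfeas k hk1 hkT) (Ne.symm hne)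
  have h1T : (1 : ℕ) ≤ T - 1 := by omega
  have ha : 0 ≤ xs 1 := hfeas 1 le_rfl h1T
  have hk_mem : k ∈ Finset.Icc 1 (T - 1) := Finset.mem_Icc.2 ⟨hk1, hkT⟩
  have h1_mem : (1 : ℕ) ∈ Finset.Icc 1 (T - 1) := Finset.mem_Icc.2 ⟨le_rfl, h1T⟩
  -- positivity of Dinfo for feasible vectors
  have hDpos : ∀ t ∈ Finset.Icc 1 (T - 1), 0 < Dinfo i0 i xs t := by
    intro t ht
    rw [Finset.mem_Icc] at ht
    have hs : 0 ≤ ∑ s ∈ Finset.Icc 1 t, i (xs s) := by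
      apply Finset.sum_nonneg
      intro s hs
      rw [Finset.mem_Icc] at hs
      exact hnonneg _ (hfeas s hs.1 (le_trans hs.2 ht.2))
    unfold Dinfo; linarith
  have hsuper := superadd hconv ha hεpos.le
  have hi0ε : i 0 ≤ i (xs k) := hmono 0 (xs k) le_rfl hεpos.le
  rcases eq_or_lt_of_le hi0ε with heq | hlt
  · -- i 0 = i (xs k): drop the excitation at k, strict gain in the linear term
    set z := Function.update xs k 0 with hz
    have hzk : z k = 0 := by simp [hz]
    have hzo : ∀ s, s ≠ k → z s = xs s := by
      intro s hs; simp [hz, Function.update_of_ne hs]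
    have hzfeas : Feasible T z := by
      intro j hj1 hjT
      by_cases h : j = k
      · rw [h, hzk]
      · rw [hzo j h]; exact hfeas j hj1 hjT
    have hzval : ∀ s, i (z s) = i (xs s) := by
      intro s
      by_cases h : s = k
      · rw [h, hzk, heq]
      · rw [hzo s h]
    have hD : ∀ t, Dinfo i0 i z t = Dinfo i0 i xs t := by
      intro t
      unfold Dinfo
      congr 1
      exact Finset.sum_congr rfl fun s _ => hzval s
    have hlin : ∑ t ∈ Finset.Icc 1 (T - 1), z t
        = (∑ t ∈ Finset.Icc 1 (T - 1), xs t) - xs k := by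
      rw [Finset.sum_eq_add_sum_sdiff_singleton_of_mem hk_mem z,
        Finset.sum_eq_add_sum_sdiff_singleton_of_mem hk_mem xs, hzk]
      have : ∑ t ∈ Finset.Icc 1 (T - 1) \ {k}, z t
          = ∑ t ∈ Finset.Icc 1 (T - 1) \ {k}, xs t := by
        apply Finset.sum_congr rfl
        intro s hs
        rw [Finset.mem_sdiff, Finset.mem_singleton] at hs
        exact hzo s hs.2
      rw [this]; ring
    have hcost : cost T i0 i z = cost T i0 i xs - xs k := by
      unfold cost
      rw [hlin]
      have : ∑ t ∈ Finset.Icc 1 (T - 1), 1 / Dinfo i0 i z t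
          = ∑ t ∈ Finset.Icc 1 (T - 1), 1 / Dinfo i0 i xs t :=
        Finset.sum_congr rfl fun t _ => by rw [hD]
      rw [this]; ring
    have := hmin z hzfeas
    rw [hcost] at this
    linarith
  · -- i 0 < i (xs k): move the excitation to slot 1
    have hstrict1 : i (xs 1) < i (xs 1 + xs k) := by linarith
    set y := Function.update (Function.update xs k 0) 1 (xs 1 + xs k) with hy
    have hk_ne1 : k ≠ 1 := by omega
    have hy1 : y 1 = xs 1 + xs k := by simp [hy]
    have hyk : y k = 0 := by
      simp [hy, Function.update_of_ne hk_ne1]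
    have hyo : ∀ s, s ≠ 1 → s ≠ k → y s = xs s := by
      intro s h1 h2
      simp [hy, Function.update_of_ne h1, Function.update_of_ne h2]
    have hyfeas : Feasible T y := by
      intro j hj1 hjT
      by_cases h1 : j = 1
      · rw [h1, hy1]; linarith
      · by_cases h2 : j = k
        · rw [h2, hyk]
        · rw [hyo j h1 h2]; exact hfeas j hj1 hjT
    -- computation of Dinfo for y
    have hcomp1 : ∀ t, 1 ≤ t → t < k →
        Dinfo i0 i y t = Dinfo i0 i xs t + (i (xs 1 + xs k) - i (xs 1)) := by
      intro t ht1 htk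
      unfold Dinfo
      have h1m : (1 : ℕ) ∈ Finset.Icc 1 t := Finset.mem_Icc.2 ⟨le_rfl, ht1⟩
      rw [Finset.sum_eq_add_sum_sdiff_singleton_of_mem h1m (fun s => i (y s)),
        Finset.sum_eq_add_sum_sdiff_singleton_of_mem h1m (fun s => i (xs s))]
      have : ∑ s ∈ Finset.Icc 1 t \ {1}, i (y s)
          = ∑ s ∈ Finset.Icc 1 t \ {1}, i (xs s) := by
        apply Finset.sum_congr rfl
        intro s hs
        rw [Finset.mem_sdiff, Finset.mem_singleton, Finset.mem_Icc] at hs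
        rw [hyo s hs.2 (by omega)]
      rw [this, hy1]; ring
    have hcomp2 : ∀ t, k ≤ t →
        Dinfo i0 i y t = Dinfo i0 i xs t
          + (i (xs 1 + xs k) - i (xs 1)) + (i 0 - i (xs k)) := by
      intro t htk
      unfold Dinfo
      have ht1 : (1 : ℕ) ≤ t := le_trans hk1 htk
      have h1m : (1 : ℕ) ∈ Finset.Icc 1 t := Finset.mem_Icc.2 ⟨le_rfl, ht1⟩
      have hkm : k ∈ Finset.Icc 1 t \ {1} := by
        rw [Finset.mem_sdiff, Finset.mem_singleton, Finset.mem_Icc]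
        exact ⟨⟨hk1, htk⟩, hk_ne1⟩
      rw [Finset.sum_eq_add_sum_sdiff_singleton_of_mem h1m (fun s => i (y s)),
        Finset.sum_eq_add_sum_sdiff_singleton_of_mem h1m (fun s => i (xs s)),
        Finset.sum_eq_add_sum_sdiff_singleton_of_mem hkm (fun s => i (y s)),
        Finset.sum_eq_add_sum_sdiff_singleton_of_mem hkm (fun s => i (xs s))]
      have : ∑ s ∈ (Finset.Icc 1 t \ {1}) \ {k}, i (y s)
          = ∑ s ∈ (Finset.Icc 1 t \ {1}) \ {k}, i (xs s) := by
        apply Finset.sum_congr rfl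
        intro s hs
        rw [Finset.mem_sdiff, Finset.mem_sdiff, Finset.mem_singleton,
          Finset.mem_singleton] at hs
        rw [hyo s hs.1.2 hs.2]
      rw [this, hy1, hyk]; ring
    have hDle : ∀ t ∈ Finset.Icc 1 (T - 1), Dinfo i0 i xs t ≤ Dinfo i0 i y t := by
      intro t ht
      rw [Finset.mem_Icc] at ht
      by_cases hkt : k ≤ t
      · rw [hcomp2 t hkt]; linarith
      · rw [hcomp1 t ht.1 (by omega)]
        have := hmono (xs 1) (xs 1 + xs k) ha (by linarith)
        linarith
    have hkm1_mem : k - 1 ∈ Finset.Icc 1 (T - 1) := Finset.mem_Icc.2 ⟨by omega, by omega⟩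
    have hDstrict : Dinfo i0 i xs (k - 1) < Dinfo i0 i y (k - 1) := by
      rw [hcomp1 (k - 1) (by omega) (by omega)]
      linarith
    -- sum of reciprocals strictly decreases
    have hrec : ∑ t ∈ Finset.Icc 1 (T - 1), 1 / Dinfo i0 i y t
        < ∑ t ∈ Finset.Icc 1 (T - 1), 1 / Dinfo i0 i xs t := by
      apply Finset.sum_lt_sum
      · intro t ht
        exact one_div_le_one_div_of_le (hDpos t ht) (hDle t ht)
      · exact ⟨k - 1, hkm1_mem, one_div_lt_one_div_of_lt (hDpos _ hkm1_mem) hDstrict⟩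
    -- linear part unchanged
    have hlin : ∑ t ∈ Finset.Icc 1 (T - 1), y t
        = ∑ t ∈ Finset.Icc 1 (T - 1), xs t := by
      have hkm : k ∈ Finset.Icc 1 (T - 1) \ {1} := by
        rw [Finset.mem_sdiff, Finset.mem_singleton]
        exact ⟨hk_mem, hk_ne1⟩
      rw [Finset.sum_eq_add_sum_sdiff_singleton_of_mem h1_mem y,
        Finset.sum_eq_add_sum_sdiff_singleton_of_mem h1_mem xs,
        Finset.sum_eq_add_sum_sdiff_singleton_of_mem hkm y,
        Finset.sum_eq_add_sum_sdiff_singleton_of_mem hkm xs]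
      have : ∑ s ∈ (Finset.Icc 1 (T - 1) \ {1}) \ {k}, y s
          = ∑ s ∈ (Finset.Icc 1 (T - 1) \ {1}) \ {k}, xs s := by
        apply Finset.sum_congr rfl
        intro s hs
        rw [Finset.mem_sdiff, Finset.mem_sdiff, Finset.mem_singleton,
          Finset.mem_singleton] at hs
        exact hyo s hs.1.2 hs.2
      rw [this, hy1, hyk]; ring
    have hcost : cost T i0 i y < cost T i0 i xs := by
      unfold cost
      rw [hlin]
      linarith
    exact absurd (hmin y hyfeas) (not_le.2 hcost)
end

section
/- Let T ≥ 2 be an integer, i₀ > 0 a real number, and i : ℝ → ℝ a function that is nonnegative, monotonically nondecreasing, convex, and differentiable on [0,∞). If moreover ∑_{t=1}^{T-1} i'(0)/(i₀ + t·i(0))² > 1, then every minimizer x* of the cost C over the feasible set satisfies x*_1 > 0 and x*_k = 0 for k = 2,…,T−1; that is, the optimal exploration is an immediate excitation. -/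
/-- A derivative at 0 within `Ici 0` is nonnegative at a one-sided minimum. -/
lemma deriv_nonneg_of_min {g : ℝ → ℝ} {d : ℝ}
    (hg : HasDerivWithinAt g d (Set.Ici 0) 0)
    (hmin : ∀ e : ℝ, 0 ≤ e → g 0 ≤ g e) : 0 ≤ d := by
  have h := hasDerivWithinAt_iff_tendsto_slope.1 hg
  rw [Set.Ici_sdiff_left] at h
  refine ge_of_tendsto h ?_
  filter_upwards [self_mem_nhdsWithin] with e (he : e ∈ Set.Ioi 0)
  have he0 : (0:ℝ) < e := he
  rw [slope_def_field]
  exact div_nonneg (sub_nonneg.2 (hmin e he0.le)) (by linarith)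

theorem immediate_excitation_optimal (T : ℕ) (hT : 2 ≤ T) (i0 : ℝ) (hi0 : 0 < i0) (i : ℝ → ℝ)
    (hnonneg : ∀ y, 0 ≤ y → 0 ≤ i y)
    (hmono : ∀ a b, 0 ≤ a → a ≤ b → i a ≤ i b)
    (hconv : ConvexOn ℝ (Set.Ici 0) i)
    (hdiff : DifferentiableOn ℝ i (Set.Ici 0))
    (hcond : 1 < ∑ t ∈ Finset.Icc 1 (T - 1),
      derivWithin i (Set.Ici 0) 0 / (i0 + (t : ℝ) * i 0) ^ 2)
    (xs : ℕ → ℝ) (hfeas : Feasible T xs)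
    (hmin : ∀ x, Feasible T x → cost T i0 i xs ≤ cost T i0 i x) :
    0 < xs 1 ∧ ∀ k, 2 ≤ k → k ≤ T - 1 → xs k = 0 := by
  set d := derivWithin i (Set.Ici 0) 0 with hd_def
  have hi00 : 0 ≤ i 0 := hnonneg 0 le_rfl
  -- the derivative at 0 is positive
  have hd : 0 < d := by
    by_contra hd
    push_neg at hd
    have : ∑ t ∈ Finset.Icc 1 (T - 1), d / (i0 + (t : ℝ) * i 0) ^ 2 ≤ 0 := by
      refine Finset.sum_nonpos fun t _ => div_nonpos_of_nonpos_of_nonneg hd (sq_nonneg _)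
    linarith
  -- strict monotonicity from convexity and positive right derivative
  have hslope : ∀ b : ℝ, 0 < b → d ≤ (i b - i 0) / b := by
    intro b hb
    have := hconv.derivWithin_le_slope (Set.self_mem_Ici) (le_of_lt hb) hb
      (hdiff 0 Set.self_mem_Ici)
    rwa [slope_def_field, sub_zero] at this
  have hlin : ∀ b : ℝ, 0 < b → i 0 + d * b ≤ i b := by
    intro b hb
    have := hslope b hb
    rw [le_div_iff₀ hb] at this
    linarith
  have hstrict : ∀ a c : ℝ, 0 ≤ a → 0 < c → i a < i (a + c) := by
    intro a c ha hc
    rcases eq_or_lt_of_le ha with rfl | ha'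
    · have := hlin c hc
      have : i 0 < i c := lt_of_lt_of_le (by nlinarith) this
      simpa using this
    · -- slope from a to 0 is at least d > 0, and slope monotone
      have hmem0 : (0:ℝ) ∈ Set.Ici (0:ℝ) \ {a} := ⟨Set.self_mem_Ici, by simp [ha'.ne]⟩
      have hmemac : a + c ∈ Set.Ici (0:ℝ) \ {a} :=
        ⟨by simp [Set.mem_Ici]; linarith, by simp; linarith⟩
      have hsm := hconv.slope_mono (Set.mem_Ici.2 ha) hmem0 hmemac (by linarith)
      have h1 : d ≤ slope i a 0 := by
        rw [slope_comm]
        have := hslope a ha'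
        rwa [slope_def_field, sub_zero]
      have h2 : 0 < slope i a (a + c) := lt_of_lt_of_le (lt_of_lt_of_le hd (h1.trans hsm)) le_rfl
      rw [slope_def_field] at h2
      have hcc : 0 < a + c - a := by linarith
      have h3 : 0 < i (a + c) - i a := by
        have := mul_pos h2 hcc
        rwa [div_mul_cancel₀ _ (ne_of_gt hcc)] at this
      linarith
  -- convex increment inequality
  have hincr : ∀ a b c : ℝ, 0 ≤ a → a ≤ b → 0 < c → i (a + c) - i a ≤ i (b + c) - i b := by
    intro a b c ha hab hc
    rcases eq_or_lt_of_le hab with rfl | hab'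
    · exact le_rfl
    · have hmem1 : a + c ∈ Set.Ici (0:ℝ) \ {a} := ⟨by simp [Set.mem_Ici]; linarith, by simp; linarith⟩
      have hmem2 : b + c ∈ Set.Ici (0:ℝ) \ {a} := ⟨by simp [Set.mem_Ici]; linarith, by simp; linarith⟩
      have h1 : slope i a (a + c) ≤ slope i a (b + c) :=
        hconv.slope_mono (Set.mem_Ici.2 ha) hmem1 hmem2 (by linarith)
      have hmem3 : a ∈ Set.Ici (0:ℝ) \ {b + c} := ⟨Set.mem_Ici.2 ha, by simp; linarith⟩
      have hmem4 : b ∈ Set.Ici (0:ℝ) \ {b + c} := ⟨by simp [Set.mem_Ici]; linarith, by simp; linarith⟩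
      have h2 : slope i (b + c) a ≤ slope i (b + c) b :=
        hconv.slope_mono (by simp [Set.mem_Ici]; linarith) hmem3 hmem4 hab'.le
      rw [slope_comm i (b+c) a, slope_comm i (b+c) b] at h2
      have := h1.trans h2
      rw [slope_def_field, slope_def_field, add_sub_cancel_left, add_sub_cancel_left] at this
      have := (div_le_div_iff_of_pos_right hc).1 this
      linarith
  have hT1 : 1 ≤ T - 1 := by omega
  have h1mem : 1 ∈ Finset.Icc 1 (T - 1) := Finset.mem_Icc.2 ⟨le_rfl, hT1⟩
  -- positivity of Dinfo for feasible vectors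
  have hDpos : ∀ (x : ℕ → ℝ) (t : ℕ), t ≤ T - 1 → Feasible T x → 0 < Dinfo i0 i x t := by
    intro x t ht hx
    have : 0 ≤ ∑ s ∈ Finset.Icc 1 t, i (x s) := by
      refine Finset.sum_nonneg fun s hs => ?_
      obtain ⟨h1, h2⟩ := Finset.mem_Icc.1 hs
      exact hnonneg _ (hx s h1 (h2.trans ht))
    unfold Dinfo; linarith
  -- Part A: optimal solution vanishes after time 1
  have claim2 : ∀ k, 2 ≤ k → k ≤ T - 1 → xs k = 0 := by
    intro k hk2 hkT
    by_contra hk0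
    have hxk : 0 < xs k := lt_of_le_of_ne (hfeas k (by omega) hkT) (Ne.symm hk0)
    have hk1 : k ≠ 1 := by omega
    set y : ℕ → ℝ := Function.update (Function.update xs k 0) 1 (xs 1 + xs k) with hy_def
    have hy1 : y 1 = xs 1 + xs k := by simp [hy_def]
    have hyk : y k = 0 := by simp [hy_def, Function.update_of_ne hk1]
    have hys : ∀ s, s ≠ 1 → s ≠ k → y s = xs s := by
      intro s h1 hkk
      simp [hy_def, Function.update_of_ne h1, Function.update_of_ne hkk]
    have hx1 : 0 ≤ xs 1 := hfeas 1 le_rfl hT1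
    have hyfeas : Feasible T y := by
      intro j hj1 hjT
      rcases eq_or_ne j 1 with rfl | hj1'
      · rw [hy1]; positivity
      rcases eq_or_ne j k with rfl | hjk'
      · rw [hyk]
      · rw [hys j hj1' hjk']; exact hfeas j hj1 hjT
    -- linear parts are equal
    have hlinsum : ∑ t ∈ Finset.Icc 1 (T - 1), y t = ∑ t ∈ Finset.Icc 1 (T - 1), xs t := by
      have hkmem : k ∈ Finset.Icc 1 (T - 1) := Finset.mem_Icc.2 ⟨by omega, hkT⟩
      have hkmem' : k ∈ (Finset.Icc 1 (T - 1)).erase 1 := Finset.mem_erase.2 ⟨hk1, hkmem⟩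
      rw [← Finset.add_sum_erase _ y h1mem, ← Finset.add_sum_erase _ xs h1mem,
          ← Finset.add_sum_erase _ y hkmem', ← Finset.add_sum_erase _ xs hkmem']
      have : ∑ s ∈ ((Finset.Icc 1 (T - 1)).erase 1).erase k, y s
          = ∑ s ∈ ((Finset.Icc 1 (T - 1)).erase 1).erase k, xs s := by
        refine Finset.sum_congr rfl fun s hs => ?_
        have hmem := Finset.mem_erase.1 hs
        exact hys s (Finset.mem_erase.1 hmem.2).1 hmem.1
      rw [this, hy1, hyk]
      ring
    -- Dinfo comparison
    have hDle : ∀ t ∈ Finset.Icc 1 (T - 1), Dinfo i0 i xs t ≤ Dinfo i0 i y t := by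
      intro t ht
      obtain ⟨ht1, htT⟩ := Finset.mem_Icc.1 ht
      have h1t : 1 ∈ Finset.Icc 1 t := Finset.mem_Icc.2 ⟨le_rfl, ht1⟩
      by_cases hkt : k ≤ t
      · have hkmem : k ∈ Finset.Icc 1 t := Finset.mem_Icc.2 ⟨by omega, hkt⟩
        have hkmem' : k ∈ (Finset.Icc 1 t).erase 1 := Finset.mem_erase.2 ⟨hk1, hkmem⟩
        unfold Dinfo
        rw [← Finset.add_sum_erase _ (fun s => i (y s)) h1t,
            ← Finset.add_sum_erase _ (fun s => i (xs s)) h1t,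
            ← Finset.add_sum_erase _ (fun s => i (y s)) hkmem',
            ← Finset.add_sum_erase _ (fun s => i (xs s)) hkmem']
        have hrest : ∑ s ∈ ((Finset.Icc 1 t).erase 1).erase k, i (y s)
            = ∑ s ∈ ((Finset.Icc 1 t).erase 1).erase k, i (xs s) := by
          refine Finset.sum_congr rfl fun s hs => ?_
          have h := Finset.mem_erase.1 hs
          rw [hys s (Finset.mem_erase.1 h.2).1 h.1]
        rw [hrest, hy1, hyk]
        have := hincr 0 (xs 1) (xs k) le_rfl hx1 hxk
        simp only [zero_add] at this
        linarith
      · push_neg at hkt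
        unfold Dinfo
        rw [← Finset.add_sum_erase _ (fun s => i (y s)) h1t,
            ← Finset.add_sum_erase _ (fun s => i (xs s)) h1t]
        have hrest : ∑ s ∈ (Finset.Icc 1 t).erase 1, i (y s)
            = ∑ s ∈ (Finset.Icc 1 t).erase 1, i (xs s) := by
          refine Finset.sum_congr rfl fun s hs => ?_
          have h := Finset.mem_erase.1 hs
          have hsk : s ≠ k := by
            have := (Finset.mem_Icc.1 h.2).2; omega
          rw [hys s h.1 hsk]
        rw [hrest, hy1]
        have : i (xs 1) ≤ i (xs 1 + xs k) := hmono _ _ hx1 (by linarith)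
        linarith
    have hD1lt : Dinfo i0 i xs 1 < Dinfo i0 i y 1 := by
      unfold Dinfo
      rw [show Finset.Icc 1 1 = {1} from rfl]
      simp only [Finset.sum_singleton]
      rw [hy1]
      have := hstrict (xs 1) (xs k) hx1 hxk
      linarith
    -- cost strictly decreases
    have hcostlt : cost T i0 i y < cost T i0 i xs := by
      unfold cost
      rw [hlinsum]
      have hsumlt : ∑ t ∈ Finset.Icc 1 (T - 1), 1 / Dinfo i0 i y t
          < ∑ t ∈ Finset.Icc 1 (T - 1), 1 / Dinfo i0 i xs t := by
        refine Finset.sum_lt_sum (fun t ht => ?_) ⟨1, h1mem, ?_⟩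
        · exact one_div_le_one_div_of_le
            (hDpos xs t (Finset.mem_Icc.1 ht).2 hfeas) (hDle t ht)
        · exact one_div_lt_one_div_of_lt (hDpos xs 1 hT1 hfeas) hD1lt
      linarith
    exact absurd (hmin y hyfeas) (not_le.2 hcostlt)
  -- Part B: xs 1 > 0
  refine ⟨?_, claim2⟩
  have hx1 : 0 ≤ xs 1 := hfeas 1 le_rfl hT1
  rcases lt_or_eq_of_le hx1 with h | h
  · exact h
  exfalso
  -- xs 1 = 0, so xs vanishes on all of [1, T-1]
  have hx1z : xs 1 = 0 := h.symm
  have hzero : ∀ s, 1 ≤ s → s ≤ T - 1 → xs s = 0 := by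
    intro s h1 h2
    rcases eq_or_lt_of_le h1 with rfl | h1'
    · exact hx1z
    · exact claim2 s h1' h2
  set g : ℝ → ℝ := fun e => cost T i0 i (Function.update xs 1 e) with hg_def
  -- explicit formula for g
  have hgformula : ∀ e : ℝ,
      g e = (∑ t ∈ Finset.Icc 1 (T - 1), (i0 + (((t:ℝ) - 1) * i 0 + i e))⁻¹) + e := by
    intro e
    have hD : ∀ t ∈ Finset.Icc 1 (T - 1),
        Dinfo i0 i (Function.update xs 1 e) t = i0 + (((t:ℝ) - 1) * i 0 + i e) := by
      intro t ht
      obtain ⟨ht1, htT⟩ := Finset.mem_Icc.1 ht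
      have h1t : 1 ∈ Finset.Icc 1 t := Finset.mem_Icc.2 ⟨le_rfl, ht1⟩
      unfold Dinfo
      rw [← Finset.add_sum_erase _ (fun s => i (Function.update xs 1 e s)) h1t]
      have hrest : ∑ s ∈ (Finset.Icc 1 t).erase 1, i (Function.update xs 1 e s)
          = ∑ s ∈ (Finset.Icc 1 t).erase 1, i 0 := by
        refine Finset.sum_congr rfl fun s hs => ?_
        have hmem := Finset.mem_erase.1 hs
        rw [Function.update_of_ne hmem.1,
            hzero s (Finset.mem_Icc.1 hmem.2).1 ((Finset.mem_Icc.1 hmem.2).2.trans htT)]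
      have hcard : ((Finset.Icc 1 t).erase 1).card = t - 1 := by
        rw [Finset.card_erase_of_mem h1t, Nat.card_Icc]
        omega
      rw [hrest, Finset.sum_const, Function.update_self, hcard, nsmul_eq_mul,
        Nat.cast_sub ht1, Nat.cast_one]
      ring
    have hlin : ∑ t ∈ Finset.Icc 1 (T - 1), Function.update xs 1 e t = e := by
      rw [← Finset.add_sum_erase _ _ h1mem, Function.update_self]
      have : ∑ t ∈ (Finset.Icc 1 (T - 1)).erase 1, Function.update xs 1 e t = 0 := by
        refine Finset.sum_eq_zero fun s hs => ?_
        have hmem := Finset.mem_erase.1 hs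
        rw [Function.update_of_ne hmem.1]
        exact hzero s (Finset.mem_Icc.1 hmem.2).1 (Finset.mem_Icc.1 hmem.2).2
      rw [this, add_zero]
    simp only [hg_def]
    unfold cost
    rw [hlin]
    congr 1
    refine Finset.sum_congr rfl fun t ht => ?_
    rw [hD t ht, one_div]
  -- derivative of g at 0 within Ici 0
  have hi' : HasDerivWithinAt i d (Set.Ici 0) 0 :=
    (hdiff 0 Set.self_mem_Ici).hasDerivWithinAt
  have hgderiv : HasDerivWithinAt g
      ((∑ t ∈ Finset.Icc 1 (T - 1), -(d / (i0 + (t:ℝ) * i 0) ^ 2)) + 1) (Set.Ici 0) 0 := by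
    have hfun : g = fun e => (∑ t ∈ Finset.Icc 1 (T - 1),
        (i0 + (((t:ℝ) - 1) * i 0 + i e))⁻¹) + e := funext hgformula
    rw [hfun]
    refine HasDerivWithinAt.add ?_ (hasDerivWithinAt_id 0 _)
    refine HasDerivWithinAt.fun_sum fun t ht => ?_
    have hne : i0 + (((t:ℝ) - 1) * i 0 + i 0) ≠ 0 := by
      obtain ⟨ht1, _⟩ := Finset.mem_Icc.1 ht
      have : (1:ℝ) ≤ (t:ℝ) := by exact_mod_cast ht1
      nlinarith
    have hbase : HasDerivWithinAt (fun e => i0 + (((t:ℝ) - 1) * i 0 + i e)) d (Set.Ici 0) 0 :=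
      ((hi'.const_add (((t:ℝ) - 1) * i 0)).const_add i0)
    have : HasDerivWithinAt (fun e => (i0 + (((t:ℝ) - 1) * i 0 + i e))⁻¹)
        (-d / (i0 + (((t:ℝ) - 1) * i 0 + i 0)) ^ 2) (Set.Ici 0) 0 := hbase.inv hne
    refine this.congr_deriv ?_
    have heq : i0 + (((t:ℝ) - 1) * i 0 + i 0) = i0 + (t:ℝ) * i 0 := by ring
    rw [heq]
    ring
  -- g has a minimum at 0 on [0, ∞)
  have hgmin : ∀ e : ℝ, 0 ≤ e → g 0 ≤ g e := by
    intro e he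
    have hfeas' : Feasible T (Function.update xs 1 e) := by
      intro j hj1 hjT
      rcases eq_or_ne j 1 with rfl | hj'
      · rw [Function.update_self]; exact he
      · rw [Function.update_of_ne hj']; exact hfeas j hj1 hjT
    have h0 : Function.update xs 1 (0:ℝ) = xs := by
      rw [← hx1z]; exact Function.update_eq_self 1 xs
    have := hmin _ hfeas'
    simpa [hg_def, h0] using this
  have hder_nonneg := deriv_nonneg_of_min hgderiv hgmin
  have hsum : ∑ t ∈ Finset.Icc 1 (T - 1), -(d / (i0 + (t:ℝ) * i 0) ^ 2)
      = -(∑ t ∈ Finset.Icc 1 (T - 1), d / (i0 + (t:ℝ) * i 0) ^ 2) := by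
    rw [Finset.sum_neg_distrib]
  rw [hsum] at hder_nonneg
  linarith
end

section
/- Let T ≥ 2 be an integer, i₀ > 0 a real number, and i : ℝ → ℝ a function that is nonnegative and monotonically nondecreasing on [0,∞). If x* ∈ ℝ^{T-1} is a minimizer of the cost C over the set of feasible vectors, then its entries are ordered: x*_1 ≥ x*_2 ≥ ⋯ ≥ x*_{T-1} ≥ 0. -/
lemma sum_swap_Icc (f : ℕ → ℝ) (k t : ℕ) (hk : k ∈ Finset.Icc 1 t)
    (hk1 : k + 1 ∈ Finset.Icc 1 t) :
    ∑ s ∈ Finset.Icc 1 t, f (Equiv.swap k (k + 1) s) = ∑ s ∈ Finset.Icc 1 t, f s := by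
  refine Finset.sum_equiv (Equiv.swap k (k + 1)) ?_ (fun s _ => rfl)
  intro s
  by_cases h1 : s = k
  · subst h1; rw [Equiv.swap_apply_left]; simp_all
  by_cases h2 : s = k + 1
  · subst h2; rw [Equiv.swap_apply_right]; simp_all
  · rw [Equiv.swap_apply_of_ne_of_ne h1 h2]

lemma Dpos (T : ℕ) (i0 : ℝ) (hi0 : 0 < i0) (i : ℝ → ℝ)
    (hnonneg : ∀ y, 0 ≤ y → 0 ≤ i y) (z : ℕ → ℝ) (hz : Feasible T z)
    (t : ℕ) (ht : t ≤ T - 1) : 0 < Dinfo i0 i z t := by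
  unfold Dinfo
  have : (0:ℝ) ≤ ∑ s ∈ Finset.Icc 1 t, i (z s) := by
    refine Finset.sum_nonneg fun s hs => ?_
    rw [Finset.mem_Icc] at hs
    exact hnonneg _ (hz s hs.1 (hs.2.trans ht))
  linarith

theorem minimizer_entries_ordered (T : ℕ) (hT : 2 ≤ T) (i0 : ℝ) (hi0 : 0 < i0) (i : ℝ → ℝ)
    (hnonneg : ∀ y, 0 ≤ y → 0 ≤ i y)
    (hmono : ∀ a b, 0 ≤ a → a ≤ b → i a ≤ i b)
    (xs : ℕ → ℝ) (hfeas : Feasible T xs)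
    (hmin : ∀ x, Feasible T x → cost T i0 i xs ≤ cost T i0 i x) :
    (∀ k, 1 ≤ k → k + 1 ≤ T - 1 → xs (k + 1) ≤ xs k) ∧
      (∀ k, 1 ≤ k → k ≤ T - 1 → 0 ≤ xs k) := by
  refine ⟨?_, fun k hk1 hk2 => hfeas k hk1 hk2⟩
  intro k hk1 hk2
  by_contra hlt
  push_neg at hlt
  have hkT : k ≤ T - 1 := le_trans (Nat.le_succ k) hk2
  have hxk : 0 ≤ xs k := hfeas k hk1 hkT
  have hxk1 : 0 ≤ xs (k + 1) := hfeas (k + 1) (by omega) hk2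
  have hile : i (xs k) ≤ i (xs (k + 1)) := hmono _ _ hxk hlt.le
  have hkmem : k ∈ Finset.Icc 1 (T - 1) := Finset.mem_Icc.mpr ⟨hk1, hkT⟩
  have hk1mem : k + 1 ∈ Finset.Icc 1 (T - 1) := Finset.mem_Icc.mpr ⟨by omega, hk2⟩
  rcases lt_or_eq_of_le hile with hstrict | heq
  · -- swap entries k and k+1
    set y : ℕ → ℝ := fun s => xs (Equiv.swap k (k + 1) s) with hy
    have hyk : y k = xs (k + 1) := by simp [hy]
    have hyk1 : y (k + 1) = xs k := by simp [hy]
    have hyother : ∀ s, s ≠ k → s ≠ k + 1 → y s = xs s := by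
      intro s h1 h2; simp [hy, Equiv.swap_apply_of_ne_of_ne h1 h2]
    have hyfeas : Feasible T y := by
      intro m hm1 hm2
      by_cases h1 : m = k
      · rw [h1, hyk]; exact hxk1
      by_cases h2 : m = k + 1
      · rw [h2, hyk1]; exact hxk
      · rw [hyother m h1 h2]; exact hfeas m hm1 hm2
    -- D_t(y) = D_t(xs) for t ≠ k in range
    have hDeq : ∀ t ∈ Finset.Icc 1 (T - 1), t ≠ k →
        Dinfo i0 i y t = Dinfo i0 i xs t := by
      intro t ht htk
      rw [Finset.mem_Icc] at ht
      unfold Dinfo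
      rcases lt_or_gt_of_ne htk with hlt' | hgt
      · congr 1
        refine Finset.sum_congr rfl fun s hs => ?_
        rw [Finset.mem_Icc] at hs
        rw [hyother s (by omega) (by omega)]
      · congr 1
        have hk' : k ∈ Finset.Icc 1 t := Finset.mem_Icc.mpr ⟨hk1, by omega⟩
        have hk1' : k + 1 ∈ Finset.Icc 1 t := Finset.mem_Icc.mpr ⟨by omega, by omega⟩
        exact sum_swap_Icc (fun s => i (xs s)) k t hk' hk1'
    -- D_k(y) = D_k(xs) + (i(xs(k+1)) - i(xs k))
    have hDk : Dinfo i0 i y k = Dinfo i0 i xs k + (i (xs (k + 1)) - i (xs k)) := by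
      unfold Dinfo
      have hkk : k ∈ Finset.Icc 1 k := Finset.mem_Icc.mpr ⟨hk1, le_refl k⟩
      have hdiff : ∑ s ∈ Finset.Icc 1 k, (i (y s) - i (xs s))
          = i (y k) - i (xs k) := by
        refine Finset.sum_eq_single_of_mem k hkk fun s hs hsk => ?_
        rw [Finset.mem_Icc] at hs
        rw [hyother s hsk (by omega)]
        ring
      rw [Finset.sum_sub_distrib] at hdiff
      rw [hyk] at hdiff
      linarith
    have hDxpos : 0 < Dinfo i0 i xs k := Dpos T i0 hi0 i hnonneg xs hfeas k hkT
    have hDypos : 0 < Dinfo i0 i y k := by rw [hDk]; linarith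
    have hinv : 1 / Dinfo i0 i y k < 1 / Dinfo i0 i xs k := by
      apply one_div_lt_one_div_of_lt hDxpos
      rw [hDk]; linarith
    have hsum1 : ∑ t ∈ Finset.Icc 1 (T - 1), (1 / Dinfo i0 i y t - 1 / Dinfo i0 i xs t)
        = 1 / Dinfo i0 i y k - 1 / Dinfo i0 i xs k := by
      refine Finset.sum_eq_single_of_mem k hkmem fun t ht htk => ?_
      rw [hDeq t ht htk]; ring
    have hsum2 : ∑ t ∈ Finset.Icc 1 (T - 1), y t = ∑ t ∈ Finset.Icc 1 (T - 1), xs t :=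
      sum_swap_Icc xs k (T - 1) hkmem hk1mem
    have hcost : cost T i0 i y < cost T i0 i xs := by
      unfold cost
      rw [Finset.sum_sub_distrib] at hsum1
      rw [hsum2]
      linarith
    exact absurd (hmin y hyfeas) (not_le.mpr hcost)
  · -- i values equal: decrease x_{k+1} to x_k
    set y : ℕ → ℝ := Function.update xs (k + 1) (xs k) with hy
    have hyk1 : y (k + 1) = xs k := by simp [hy]
    have hyother : ∀ s, s ≠ k + 1 → y s = xs s := by
      intro s h; simp [hy, Function.update_of_ne h]
    have hyfeas : Feasible T y := by
      intro m hm1 hm2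
      by_cases h : m = k + 1
      · rw [h, hyk1]; exact hxk
      · rw [hyother m h]; exact hfeas m hm1 hm2
    have hiy : ∀ s, i (y s) = i (xs s) := by
      intro s
      by_cases h : s = k + 1
      · rw [h, hyk1, heq]
      · rw [hyother s h]
    have hDeq : ∀ t, Dinfo i0 i y t = Dinfo i0 i xs t := by
      intro t
      unfold Dinfo
      congr 1
      exact Finset.sum_congr rfl fun s _ => hiy s
    have hsum2 : ∑ t ∈ Finset.Icc 1 (T - 1), (y t - xs t) = y (k + 1) - xs (k + 1) :=
      Finset.sum_eq_single_of_mem (k + 1) hk1mem fun t _ htk => by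
        rw [hyother t htk]; ring
    rw [hyk1] at hsum2
    have hcost : cost T i0 i y < cost T i0 i xs := by
      unfold cost
      have h1 : ∑ t ∈ Finset.Icc 1 (T - 1), 1 / Dinfo i0 i y t
          = ∑ t ∈ Finset.Icc 1 (T - 1), 1 / Dinfo i0 i xs t :=
        Finset.sum_congr rfl fun t _ => by rw [hDeq t]
      rw [Finset.sum_sub_distrib] at hsum2
      linarith
    exact absurd (hmin y hyfeas) (not_le.mpr hcost)
end

section
/- Let T ≥ 3 be an integer, i₀ > 0 a real number, and i : ℝ → ℝ a function that is nonnegative and monotonically nondecreasing on [0,∞). Let x ∈ ℝ^{T-1} be feasible, let 1 ≤ j ≤ T−2 with x_j ≥ x_{j+1}, and let x̃ be the vector obtained from x by swapping the entries x_j and x_{j+1}. Then C(x) ≤ C(x̃). -/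
theorem swap_decreases_cost (T : ℕ) (hT : 3 ≤ T) (i0 : ℝ) (hi0 : 0 < i0) (i : ℝ → ℝ)
    (hnonneg : ∀ y, 0 ≤ y → 0 ≤ i y)
    (hmono : ∀ a b, 0 ≤ a → a ≤ b → i a ≤ i b)
    (x : ℕ → ℝ) (hfeas : Feasible T x)
    (j : ℕ) (hj1 : 1 ≤ j) (hj2 : j ≤ T - 2) (hswap : x (j + 1) ≤ x j)
    (xt : ℕ → ℝ)
    (hxt : ∀ k, xt k = if k = j then x (j + 1) else if k = j + 1 then x j else x k) :
    cost T i0 i x ≤ cost T i0 i xt := by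
  have hjT : j + 1 ≤ T - 1 := by omega
  have hxj1 : 0 ≤ x (j + 1) := hfeas (j + 1) (by omega) hjT
  have hxj : 0 ≤ x j := le_trans hxj1 hswap
  have hxtval : ∀ a, xt a = x (Equiv.swap j (j + 1) a) := by
    intro a
    rcases eq_or_ne a j with rfl | h1
    · simp [hxt, Equiv.swap_apply_left]
    · rcases eq_or_ne a (j + 1) with rfl | h2
      · simp [hxt, Equiv.swap_apply_right, (by omega : j + 1 ≠ j)]
      · rw [hxt, if_neg h1, if_neg h2, Equiv.swap_apply_of_ne_of_ne h1 h2]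
  have hxtnn : ∀ k, 1 ≤ k → k ≤ T - 1 → 0 ≤ xt k := by
    intro k hk1 hk2
    rw [hxt]
    split_ifs with h1 h2
    · exact hxj1
    · exact hxj
    · exact hfeas k hk1 hk2
  -- permutation invariance of sums over Icc 1 t when j+1 ≤ t
  have hperm : ∀ (f : ℝ → ℝ) (t : ℕ), j + 1 ≤ t →
      ∑ s ∈ Finset.Icc 1 t, f (xt s) = ∑ s ∈ Finset.Icc 1 t, f (x s) := by
    intro f t ht
    refine Finset.sum_equiv (Equiv.swap j (j + 1)) ?_ ?_
    · intro a
      rcases eq_or_ne a j with rfl | h1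
      · simp only [Equiv.swap_apply_left, Finset.mem_Icc]; omega
      · rcases eq_or_ne a (j + 1) with rfl | h2
        · simp only [Equiv.swap_apply_right, Finset.mem_Icc]; omega
        · rw [Equiv.swap_apply_of_ne_of_ne h1 h2]
    · intro a _
      rw [hxtval]
  -- D equality for t ≠ j
  have hDeq : ∀ t, 1 ≤ t → t ≤ T - 1 → t ≠ j →
      Dinfo i0 i xt t = Dinfo i0 i x t := by
    intro t ht1 ht2 htj
    unfold Dinfo
    rcases lt_or_gt_of_ne htj with hlt | hgt
    · congr 1
      refine Finset.sum_congr rfl ?_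
      intro s hs
      simp only [Finset.mem_Icc] at hs
      rw [hxt, if_neg (by omega), if_neg (by omega)]
    · rw [hperm i t (by omega)]
  -- D at j
  have hDj : Dinfo i0 i xt j ≤ Dinfo i0 i x j := by
    unfold Dinfo
    have hj' : j = (j - 1) + 1 := by omega
    rw [hj', Finset.sum_Icc_succ_top (by omega), Finset.sum_Icc_succ_top (by omega)]
    have h1 : ∑ s ∈ Finset.Icc 1 (j - 1), i (xt s) = ∑ s ∈ Finset.Icc 1 (j - 1), i (x s) := by
      refine Finset.sum_congr rfl ?_
      intro s hs
      simp only [Finset.mem_Icc] at hs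
      rw [hxt, if_neg (by omega), if_neg (by omega)]
    have h2 : i (xt (j - 1 + 1)) ≤ i (x (j - 1 + 1)) := by
      rw [(by omega : j - 1 + 1 = j), hxt, if_pos rfl]
      exact hmono _ _ hxj1 hswap
    linarith
  have hDtpos : ∀ t, t ≤ T - 1 → 0 < Dinfo i0 i xt t := by
    intro t ht
    unfold Dinfo
    have : 0 ≤ ∑ s ∈ Finset.Icc 1 t, i (xt s) := by
      refine Finset.sum_nonneg ?_
      intro s hs
      simp only [Finset.mem_Icc] at hs
      exact hnonneg _ (hxtnn s hs.1 (by omega))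
    linarith
  unfold cost
  have hsum2 : ∑ t ∈ Finset.Icc 1 (T - 1), x t = ∑ t ∈ Finset.Icc 1 (T - 1), xt t := by
    rw [hperm (fun y => y) (T - 1) hjT]
  rw [hsum2]
  have hmain : ∑ t ∈ Finset.Icc 1 (T - 1), 1 / Dinfo i0 i x t ≤
      ∑ t ∈ Finset.Icc 1 (T - 1), 1 / Dinfo i0 i xt t := by
    refine Finset.sum_le_sum ?_
    intro t ht
    simp only [Finset.mem_Icc] at ht
    rcases eq_or_ne t j with rfl | htj
    · exact one_div_le_one_div_of_le (hDtpos t ht.2) hDj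
    · rw [hDeq t ht.1 ht.2 htj]
  linarith
end

section
/- Let T ≥ 2 be an integer, i₀ > 0 a real number, and i : ℝ → ℝ a function that is nonnegative, monotonically nondecreasing, convex, and differentiable on [0,∞). If the all-zero vector is a minimizer of the cost C over the set of feasible vectors, then ∑_{t=1}^{T-1} i'(0)/(i₀ + t·i(0))² ≤ 1. -/
set_option maxHeartbeats 1000000


theorem lazy_minimizer_necessary_condition (T : ℕ) (hT : 2 ≤ T) (i0 : ℝ) (hi0 : 0 < i0)
    (i : ℝ → ℝ)
    (hnonneg : ∀ y, 0 ≤ y → 0 ≤ i y)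
    (hmono : ∀ a b, 0 ≤ a → a ≤ b → i a ≤ i b)
    (hconv : ConvexOn ℝ (Set.Ici 0) i)
    (hdiff : DifferentiableOn ℝ i (Set.Ici 0))
    (hmin : ∀ x, Feasible T x → cost T i0 i (fun _ => 0) ≤ cost T i0 i x) :
    ∑ t ∈ Finset.Icc 1 (T - 1),
      derivWithin i (Set.Ici 0) 0 / (i0 + (t : ℝ) * i 0) ^ 2 ≤ 1 := by
  set d := derivWithin i (Set.Ici 0) 0 with hddef
  clear_value d
  have hmem0 : (0:ℝ) ∈ Set.Ici (0:ℝ) := Set.self_mem_Ici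
  have hi00 : 0 ≤ i 0 := hnonneg 0 le_rfl
  have hA : ∀ t : ℕ, (0:ℝ) < i0 + (t:ℝ) * i 0 := by
    intro t; positivity
  -- the right derivative is nonnegative
  have hder : HasDerivWithinAt i d (Set.Ici 0) 0 := by
    rw [hddef]; exact (hdiff 0 hmem0).hasDerivWithinAt
  have hd0 : 0 ≤ d := by
    have htend := hasDerivWithinAt_iff_tendsto_slope.mp hder
    rw [Set.Ici_sdiff_left] at htend
    refine ge_of_tendsto htend ?_
    filter_upwards [self_mem_nhdsWithin] with y hy
    have hy0 : (0:ℝ) < y := hy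
    rw [slope_def_field, sub_zero]
    have := hmono 0 y le_rfl hy0.le
    apply div_nonneg (by linarith) hy0.le
  have hM : 0 ≤ i 1 - i 0 := by linarith [hmono 0 1 le_rfl zero_le_one]
  have hn1 : 1 ≤ T - 1 := by omega
  set K : ℝ := (T - 1 : ℕ) * d * (i 1 - i 0) / i0 ^ 3 with hKdef
  clear_value K
  have hK : 0 ≤ K := by rw [hKdef]; positivity
  have hD0 : ∀ t : ℕ, Dinfo i0 i (fun _ => 0) t = i0 + (t:ℝ) * i 0 := by
    intro t
    simp [Dinfo, Finset.sum_const, Nat.card_Icc, Nat.add_sub_cancel, nsmul_eq_mul]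
  have key : ∀ ε : ℝ, 0 < ε → ε ≤ 1 →
      ∑ t ∈ Finset.Icc 1 (T - 1), d / (i0 + (t : ℝ) * i 0) ^ 2 ≤ 1 + ε * K := by
    intro ε hε hε1
    set x : ℕ → ℝ := fun k => if k = 1 then ε else 0 with hxdef
    clear_value x
    have hδ0' : 0 ≤ i ε - i 0 := by linarith [hmono 0 ε le_rfl hε.le]
    set δ : ℝ := i ε - i 0 with hδdef
    clear_value δ
    have hδ0 : 0 ≤ δ := hδ0'
    have hDx : ∀ t : ℕ, 1 ≤ t → Dinfo i0 i x t = (i0 + (t:ℝ) * i 0) + δ := by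
      intro t ht
      have hsum : ∀ s ∈ Finset.Icc 1 t, i (x s) = i 0 + (if s = 1 then i ε - i 0 else 0) := by
        intro s _
        by_cases h : s = 1 <;> simp [hxdef, h]
      rw [Dinfo, Finset.sum_congr rfl hsum, Finset.sum_add_distrib, Finset.sum_ite_eq',
        Finset.sum_const, Nat.card_Icc, Nat.add_sub_cancel,
        if_pos (Finset.mem_Icc.mpr ⟨le_rfl, ht⟩), hδdef]
      push_cast
      ring
    have hfeas : Feasible T x := by
      intro k _ _
      simp only [hxdef]
      split
      · exact hε.le
      · exact le_rfl
    have hsumx : ∑ t ∈ Finset.Icc 1 (T - 1), x t = ε := by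
      simp only [hxdef]
      rw [Finset.sum_ite_eq', if_pos (Finset.mem_Icc.mpr ⟨le_rfl, hn1⟩)]
    have e0 : ∑ t ∈ Finset.Icc 1 (T - 1), 1 / Dinfo i0 i (fun _ => 0) t
        = ∑ t ∈ Finset.Icc 1 (T - 1), 1 / (i0 + (t:ℝ) * i 0) :=
      Finset.sum_congr rfl fun t _ => by rw [hD0]
    have e1 : ∑ t ∈ Finset.Icc 1 (T - 1), 1 / Dinfo i0 i x t
        = ∑ t ∈ Finset.Icc 1 (T - 1), 1 / ((i0 + (t:ℝ) * i 0) + δ) :=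
      Finset.sum_congr rfl fun t ht => by rw [hDx t (Finset.mem_Icc.mp ht).1]
    have h := hmin x hfeas
    rw [cost, cost, e0, e1, hsumx] at h
    simp only [Finset.sum_const_zero, add_zero] at h
    -- from optimality: ∑ δ/(A t (A t + δ)) ≤ ε
    have hstep : ∑ t ∈ Finset.Icc 1 (T - 1),
        δ / ((i0 + (t:ℝ) * i 0) * ((i0 + (t:ℝ) * i 0) + δ)) ≤ ε := by
      have h2 : ∑ t ∈ Finset.Icc 1 (T - 1),
          (1 / (i0 + (t:ℝ) * i 0) - 1 / ((i0 + (t:ℝ) * i 0) + δ)) ≤ ε := by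
        rw [Finset.sum_sub_distrib]
        linarith
      refine le_trans (le_of_eq (Finset.sum_congr rfl fun t _ => ?_)) h2
      have hAt := hA t
      have hBt : (0:ℝ) < (i0 + (t:ℝ) * i 0) + δ := by linarith
      field_simp
      ring
    -- ε d ≤ δ from convexity
    have hεd : ε * d ≤ δ := by
      have hs := hconv.derivWithin_le_slope hmem0 (Set.mem_Ici.mpr hε.le) hε (hdiff 0 hmem0)
      rw [slope_def_field, sub_zero] at hs
      rw [← hddef] at hs
      calc ε * d ≤ ε * ((i ε - i 0) / ε) := by
            exact mul_le_mul_of_nonneg_left hs hε.le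
        _ = δ := by rw [hδdef]; field_simp
    -- hence ∑ d/(A t (A t + δ)) ≤ 1
    have hS' : ∑ t ∈ Finset.Icc 1 (T - 1),
        d / ((i0 + (t:ℝ) * i 0) * ((i0 + (t:ℝ) * i 0) + δ)) ≤ 1 := by
      have h2 : ∀ t ∈ Finset.Icc 1 (T - 1),
          ε * (d / ((i0 + (t:ℝ) * i 0) * ((i0 + (t:ℝ) * i 0) + δ)))
            ≤ δ / ((i0 + (t:ℝ) * i 0) * ((i0 + (t:ℝ) * i 0) + δ)) := by
        intro t _
        have hAt := hA t
        have hBt : (0:ℝ) < (i0 + (t:ℝ) * i 0) + δ := by linarith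
        rw [mul_div_assoc']
        apply div_le_div_of_nonneg_right hεd (by positivity)
      have h3 := Finset.sum_le_sum h2
      rw [← Finset.mul_sum] at h3
      have h4 := h3.trans hstep
      nlinarith
    -- δ ≤ ε (i 1 - i 0) from convexity
    have hδM : δ ≤ ε * (i 1 - i 0) := by
      have hs := hconv.secant_mono hmem0 (Set.mem_Ici.mpr hε.le)
        (Set.mem_Ici.mpr zero_le_one) hε.ne' one_ne_zero hε1
      rw [sub_zero, sub_zero, div_one] at hs
      calc δ = ε * ((i ε - i 0) / ε) := by rw [hδdef]; field_simp
        _ ≤ ε * (i 1 - i 0) := mul_le_mul_of_nonneg_left hs hε.le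
    -- termwise comparison and conclusion
    have hfinal : ∀ t ∈ Finset.Icc 1 (T - 1),
        d / (i0 + (t:ℝ) * i 0) ^ 2
          ≤ d / ((i0 + (t:ℝ) * i 0) * ((i0 + (t:ℝ) * i 0) + δ)) + d * δ / i0 ^ 3 := by
      intro t _
      have hAt := hA t
      have hBt : (0:ℝ) < (i0 + (t:ℝ) * i 0) + δ := by linarith
      have e : d / (i0 + (t:ℝ) * i 0) ^ 2
          = d / ((i0 + (t:ℝ) * i 0) * ((i0 + (t:ℝ) * i 0) + δ))
            + d * δ / ((i0 + (t:ℝ) * i 0) ^ 2 * ((i0 + (t:ℝ) * i 0) + δ)) := by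
        field_simp
      rw [e]
      have h0t : (0:ℝ) ≤ (t:ℝ) * i 0 := mul_nonneg (Nat.cast_nonneg t) hi00
      have h1 : i0 ≤ i0 + (t:ℝ) * i 0 := by linarith
      have h2 : i0 ≤ (i0 + (t:ℝ) * i 0) + δ := by nlinarith
      have h3 : i0 ^ 3 ≤ (i0 + (t:ℝ) * i 0) ^ 2 * ((i0 + (t:ℝ) * i 0) + δ) := by
        calc i0 ^ 3 = i0 ^ 2 * i0 := by ring
          _ ≤ (i0 + (t:ℝ) * i 0) ^ 2 * ((i0 + (t:ℝ) * i 0) + δ) := by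
            apply mul_le_mul (by nlinarith) h2 hi0.le (by positivity)
      have h4 := div_le_div_of_nonneg_left (mul_nonneg hd0 hδ0) (by positivity : (0:ℝ) < i0 ^ 3) h3
      linarith
    have hsum2 := Finset.sum_le_sum hfinal
    rw [Finset.sum_add_distrib, Finset.sum_const, Nat.card_Icc, Nat.add_sub_cancel,
      nsmul_eq_mul] at hsum2
    have hlast : ((T - 1 : ℕ) : ℝ) * (d * δ / i0 ^ 3) ≤ ε * K := by
      rw [hKdef]
      have : d * δ ≤ d * (ε * (i 1 - i 0)) := mul_le_mul_of_nonneg_left hδM hd0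
      have hT1 : (0:ℝ) ≤ (T - 1 : ℕ) := Nat.cast_nonneg _
      rw [div_eq_mul_inv, div_eq_mul_inv]
      calc ((T - 1 : ℕ) : ℝ) * (d * δ * (i0 ^ 3)⁻¹)
          = ((T - 1 : ℕ) * (i0 ^ 3)⁻¹) * (d * δ) := by ring
        _ ≤ ((T - 1 : ℕ) * (i0 ^ 3)⁻¹) * (d * (ε * (i 1 - i 0))) := by
            exact mul_le_mul_of_nonneg_left this (by positivity)
        _ = ε * ((T - 1 : ℕ) * d * (i 1 - i 0) * (i0 ^ 3)⁻¹) := by ring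
    linarith
  -- conclude by letting ε → 0
  by_contra hcon
  push_neg at hcon
  set S := ∑ t ∈ Finset.Icc 1 (T - 1), d / (i0 + (t : ℝ) * i 0) ^ 2 with hSdef
  set ε := min 1 ((S - 1) / (K + 1)) with hεdef
  have hS1 : 0 < S - 1 := by linarith
  have hε : 0 < ε := lt_min one_pos (by positivity)
  have hε1 : ε ≤ 1 := min_le_left _ _
  have h := key ε hε hε1
  have h2 : ε ≤ (S - 1) / (K + 1) := min_le_right _ _
  have h3 : ε * K ≤ (S - 1) / (K + 1) * K := mul_le_mul_of_nonneg_right h2 hK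
  have h4 : (S - 1) / (K + 1) * K < S - 1 := by
    rw [div_mul_eq_mul_div, div_lt_iff₀ (by linarith)]
    nlinarith
  linarith
end

section
/- Let T ≥ 3 be an integer, i₀ > 0 a real number, and i : ℝ → ℝ a function that is nonnegative, monotonically nondecreasing, convex, and differentiable on [0,∞). Let x ∈ ℝ^{T-1} be feasible with x_1 ≥ x_2 ≥ ⋯ ≥ x_{T-1} ≥ 0, and suppose x_k > 0 for some k with 2 ≤ k ≤ T−1. Then x is not a minimizer of C over the feasible set: there exists a feasible y with C(y) < C(x). -/
/-- Superadditivity of a convex function on `[0,∞)`. -/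
lemma convex_superadd {i : ℝ → ℝ} (hconv : ConvexOn ℝ (Set.Ici 0) i)
    {b c : ℝ} (hb : 0 ≤ b) (hc : 0 ≤ c) : i b + i c ≤ i (b + c) + i 0 := by
  rcases eq_or_lt_of_le hc with h | hc'
  · rw [← h, add_zero]
  rcases eq_or_lt_of_le hb with h | hb'
  · rw [← h, zero_add, add_comm (i 0) (i c), add_comm (i c) (i 0)]
  have hs : 0 < b + c := by linarith
  have hmem : (b + c) ∈ Set.Ici (0:ℝ) := le_of_lt hs
  have h0 : (0:ℝ) ∈ Set.Ici (0:ℝ) := Set.self_mem_Ici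
  set l : ℝ := c / (b + c) with hl
  set m : ℝ := b / (b + c) with hm
  have hl0 : 0 ≤ l := by positivity
  have hm0 : 0 ≤ m := by positivity
  have hlm : l + m = 1 := by
    rw [hl, hm, ← add_div, show c + b = b + c from add_comm c b]
    exact div_self hs.ne'
  have hml : m + l = 1 := by rw [add_comm]; exact hlm
  have h1 := hconv.2 hmem h0 hl0 hm0 hlm
  have h2 := hconv.2 hmem h0 hm0 hl0 hml
  have e1 : l • (b + c) + m • (0:ℝ) = c := by
    simp only [smul_eq_mul, mul_zero, add_zero, hl]
    exact div_mul_cancel₀ c hs.ne'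
  have e2 : m • (b + c) + l • (0:ℝ) = b := by
    simp only [smul_eq_mul, mul_zero, add_zero, hm]
    exact div_mul_cancel₀ b hs.ne'
  rw [e1] at h1
  rw [e2] at h2
  simp only [smul_eq_mul] at h1 h2
  have k1 : l * i (b + c) + m * i (b + c) = i (b + c) := by
    rw [← add_mul, hlm, one_mul]
  have k2 : l * i 0 + m * i 0 = i 0 := by
    rw [← add_mul, hlm, one_mul]
  linarith [h1, h2, k1, k2]

theorem ordered_with_late_excitation_not_minimizer (T : ℕ) (hT : 3 ≤ T) (i0 : ℝ)
    (hi0 : 0 < i0) (i : ℝ → ℝ)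
    (hnonneg : ∀ y, 0 ≤ y → 0 ≤ i y)
    (hmono : ∀ a b, 0 ≤ a → a ≤ b → i a ≤ i b)
    (hconv : ConvexOn ℝ (Set.Ici 0) i)
    (hdiff : DifferentiableOn ℝ i (Set.Ici 0))
    (x : ℕ → ℝ) (hfeas : Feasible T x)
    (hord : ∀ k, 1 ≤ k → k + 1 ≤ T - 1 → x (k + 1) ≤ x k)
    (k : ℕ) (hk1 : 2 ≤ k) (hk2 : k ≤ T - 1) (hkpos : 0 < x k) :
    ∃ y, Feasible T y ∧ cost T i0 i y < cost T i0 i x := by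
  set n := T - 1 with hn
  have hn2 : 2 ≤ n := by omega
  have hkne1 : k ≠ 1 := by omega
  have h1mem : 1 ∈ Finset.Icc 1 n := by simp; omega
  have hkmem : k ∈ Finset.Icc 1 n := by simp; omega
  have hx1 : 0 ≤ x 1 := hfeas 1 le_rfl (by omega)
  have hxk : 0 ≤ x k := le_of_lt hkpos
  have hDxpos : ∀ t, t ≤ n → 0 < Dinfo i0 i x t := by
    intro t htn
    have : 0 ≤ ∑ s ∈ Finset.Icc 1 t, i (x s) := by
      apply Finset.sum_nonneg
      intro s hs
      simp only [Finset.mem_Icc] at hs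
      exact hnonneg _ (hfeas s hs.1 (by omega))
    unfold Dinfo; linarith
  by_cases hcase : i (x k) = i 0
  · -- just zero out coordinate k
    refine ⟨Function.update x k 0, ?_, ?_⟩
    · intro j hj1 hj2
      by_cases hj : j = k
      · rw [hj, Function.update_self]
      · rw [Function.update_of_ne hj]; exact hfeas j hj1 hj2
    · have hD : ∀ t, Dinfo i0 i (Function.update x k 0) t = Dinfo i0 i x t := by
        intro t
        unfold Dinfo
        congr 1
        apply Finset.sum_congr rfl
        intro s _
        by_cases hs : s = k
        · subst hs; rw [Function.update_self]; exact hcase.symm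
        · rw [Function.update_of_ne hs]
      unfold cost
      have hA : (∑ t ∈ Finset.Icc 1 n, 1 / Dinfo i0 i (Function.update x k 0) t)
          = ∑ t ∈ Finset.Icc 1 n, 1 / Dinfo i0 i x t := by
        apply Finset.sum_congr rfl; intro t _; rw [hD]
      have hB : (∑ t ∈ Finset.Icc 1 n, Function.update x k 0 t)
          < ∑ t ∈ Finset.Icc 1 n, x t := by
        apply Finset.sum_lt_sum
        · intro s _
          by_cases hs : s = k
          · subst hs; rw [Function.update_self]; exact hxk
          · rw [Function.update_of_ne hs]
        · exact ⟨k, hkmem, by simp [hkpos]⟩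
      rw [hA]
      exact add_lt_add_right hB _
  · -- move x k to coordinate 1
    have hik : i 0 < i (x k) :=
      lt_of_le_of_ne (hmono 0 (x k) le_rfl hxk) (fun h => hcase h.symm)
    set y : ℕ → ℝ := Function.update (Function.update x 1 (x 1 + x k)) k 0 with hy
    have hy1 : y 1 = x 1 + x k := by
      rw [hy, Function.update_of_ne (Ne.symm hkne1), Function.update_self]
    have hyk : y k = 0 := by rw [hy, Function.update_self]
    have hyo : ∀ s, s ≠ 1 → s ≠ k → y s = x s := by
      intro s hs1 hsk
      rw [hy, Function.update_of_ne hsk, Function.update_of_ne hs1]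
    have hsuper := convex_superadd hconv hx1 hxk
    -- decomposition lemma
    have decomp : ∀ (f : ℕ → ℝ) (S : Finset ℕ), 1 ∈ S → k ∈ S →
        ∑ s ∈ S, f s = f 1 + f k + ∑ s ∈ (S.erase 1).erase k, f s := by
      intro f S h1S hkS
      have hk' : k ∈ S.erase 1 := Finset.mem_erase.mpr ⟨hkne1, hkS⟩
      rw [← Finset.add_sum_erase S f h1S, ← Finset.add_sum_erase _ f hk']
      ring
    have hDle : ∀ t, 1 ≤ t → Dinfo i0 i x t ≤ Dinfo i0 i y t := by
      intro t ht
      have h1t : 1 ∈ Finset.Icc 1 t := by simp; omega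
      unfold Dinfo
      by_cases hkt : k ≤ t
      · have hkt' : k ∈ Finset.Icc 1 t := by simp; omega
        rw [decomp (fun s => i (x s)) _ h1t hkt', decomp (fun s => i (y s)) _ h1t hkt']
        have hrest : ∑ s ∈ ((Finset.Icc 1 t).erase 1).erase k, i (x s)
            = ∑ s ∈ ((Finset.Icc 1 t).erase 1).erase k, i (y s) := by
          apply Finset.sum_congr rfl
          intro s hs
          have hsk : s ≠ k := (Finset.mem_erase.mp hs).1
          have hs1 : s ≠ 1 := (Finset.mem_erase.mp (Finset.mem_erase.mp hs).2).1
          rw [hyo s hs1 hsk]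
        simp only [hy1, hyk]
        linarith [hsuper, hrest.le, hrest.ge]
      · apply add_le_add_right
        apply Finset.sum_le_sum
        intro s hs
        simp only [Finset.mem_Icc] at hs
        have hsk : s ≠ k := by omega
        by_cases hs1 : s = 1
        · subst hs1
          rw [hy1]
          exact hmono (x 1) (x 1 + x k) hx1 (by linarith)
        · rw [hyo s hs1 hsk]
    have hD1 : Dinfo i0 i x 1 < Dinfo i0 i y 1 := by
      unfold Dinfo
      rw [Finset.Icc_self, Finset.sum_singleton, Finset.sum_singleton, hy1]
      linarith [hsuper, hik]
    refine ⟨y, ?_, ?_⟩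
    · intro j hj1 hj2
      by_cases hjk : j = k
      · rw [hjk, hyk]
      · by_cases hj1' : j = 1
        · rw [hj1', hy1]; linarith
        · rw [hyo j hj1' hjk]; exact hfeas j hj1 hj2
    · unfold cost
      have hA : (∑ t ∈ Finset.Icc 1 n, 1 / Dinfo i0 i y t)
          < ∑ t ∈ Finset.Icc 1 n, 1 / Dinfo i0 i x t := by
        apply Finset.sum_lt_sum
        · intro t htm
          simp only [Finset.mem_Icc] at htm
          exact one_div_le_one_div_of_le (hDxpos t htm.2) (hDle t htm.1)
        · exact ⟨1, h1mem, one_div_lt_one_div_of_lt (hDxpos 1 (by omega)) hD1⟩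
      have hB : (∑ t ∈ Finset.Icc 1 n, y t) = ∑ t ∈ Finset.Icc 1 n, x t := by
        rw [decomp y _ h1mem hkmem, decomp x _ h1mem hkmem, hy1, hyk]
        have hrest : ∑ s ∈ ((Finset.Icc 1 n).erase 1).erase k, y s
            = ∑ s ∈ ((Finset.Icc 1 n).erase 1).erase k, x s := by
          apply Finset.sum_congr rfl
          intro s hs
          have hsk : s ≠ k := (Finset.mem_erase.mp hs).1
          have hs1 : s ≠ 1 := (Finset.mem_erase.mp (Finset.mem_erase.mp hs).2).1
          exact hyo s hs1 hsk
        rw [hrest]; ring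
      rw [hB]
      exact add_lt_add_left hA _
end

section
/- Let T ≥ 2 be an integer, i₀ > 0 a real number, and i : ℝ → ℝ a function that is nonnegative and differentiable on [0,∞). Let x* be a minimizer of C over the feasible set and let 1 ≤ k ≤ T−1. If x*_k = 0, then the first-order (KKT) condition at the boundary holds: ∑_{t=k}^{T-1} i'(0)/D_t(x*)² ≤ 1. -/
theorem kkt_boundary_condition (T : ℕ) (hT : 2 ≤ T) (i0 : ℝ) (hi0 : 0 < i0) (i : ℝ → ℝ)
    (hnonneg : ∀ y, 0 ≤ y → 0 ≤ i y)
    (hdiff : DifferentiableOn ℝ i (Set.Ici 0))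
    (xs : ℕ → ℝ) (hfeas : Feasible T xs)
    (hmin : ∀ x, Feasible T x → cost T i0 i xs ≤ cost T i0 i x)
    (k : ℕ) (hk1 : 1 ≤ k) (hk2 : k ≤ T - 1) (hzero : xs k = 0) :
    ∑ t ∈ Finset.Icc k (T - 1),
      derivWithin i (Set.Ici 0) 0 / (Dinfo i0 i xs t) ^ 2 ≤ 1 := by
  classical
  set i' : ℝ := derivWithin i (Set.Ici 0) 0 with hi'def
  -- positivity of D_t for t ≤ T-1
  have hD : ∀ t, t ≤ T - 1 → 0 < Dinfo i0 i xs t := by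
    intro t ht
    have hsum : 0 ≤ ∑ s ∈ Finset.Icc 1 t, i (xs s) := by
      apply Finset.sum_nonneg
      intro s hs
      rw [Finset.mem_Icc] at hs
      exact hnonneg _ (hfeas s hs.1 (le_trans hs.2 ht))
    unfold Dinfo; linarith
  set S : ℝ := ∑ t ∈ Finset.Icc k (T - 1), i' / (Dinfo i0 i xs t) ^ 2 with hSdef
  suffices h : (0 : ℝ) ≤ 1 - S by linarith
  set g : ℝ → ℝ := fun ε => cost T i0 i (Function.update xs k ε) with hgdef
  -- explicit formula for g
  have hDup : ∀ ε t, t ≤ T - 1 → Dinfo i0 i (Function.update xs k ε) t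
      = if k ≤ t then Dinfo i0 i xs t - i 0 + i ε else Dinfo i0 i xs t := by
    intro ε t _
    by_cases hkt : k ≤ t
    · have hk : k ∈ Finset.Icc 1 t := Finset.mem_Icc.2 ⟨hk1, hkt⟩
      simp only [if_pos hkt]
      unfold Dinfo
      rw [Finset.sum_eq_sum_sdiff_singleton_add hk, Finset.sum_eq_sum_sdiff_singleton_add hk
        (fun s => i (xs s))]
      have h1 : ∀ s ∈ Finset.Icc 1 t \ {k}, i (Function.update xs k ε s) = i (xs s) := by
        intro s hs
        rw [Finset.mem_sdiff, Finset.mem_singleton] at hs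
        rw [Function.update_of_ne hs.2]
      rw [Finset.sum_congr rfl h1, Function.update_self, hzero]
      ring
    · simp only [if_neg hkt]
      unfold Dinfo
      congr 1
      apply Finset.sum_congr rfl
      intro s hs
      rw [Finset.mem_Icc] at hs
      rw [Function.update_of_ne (by omega)]
  have hkmem : k ∈ Finset.Icc 1 (T - 1) := Finset.mem_Icc.2 ⟨hk1, hk2⟩
  have hgeq : ∀ ε, g ε =
      (∑ t ∈ Finset.Icc 1 (T - 1),
        (if k ≤ t then (Dinfo i0 i xs t - i 0 + i ε)⁻¹ else (Dinfo i0 i xs t)⁻¹))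
      + ((∑ t ∈ Finset.Icc 1 (T - 1) \ {k}, xs t) + ε) := by
    intro ε
    simp only [hgdef, cost]
    congr 1
    · apply Finset.sum_congr rfl
      intro t ht
      rw [Finset.mem_Icc] at ht
      rw [hDup ε t ht.2, one_div]
      split_ifs <;> rfl
    · rw [Finset.sum_eq_sum_sdiff_singleton_add hkmem, Function.update_self]
      congr 1
      apply Finset.sum_congr rfl
      intro s hs
      rw [Finset.mem_sdiff, Finset.mem_singleton] at hs
      rw [Function.update_of_ne hs.2]
  -- derivative of g at 0 within Ici 0
  have hdi : HasDerivWithinAt i i' (Set.Ici 0) 0 :=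
    (hdiff 0 (Set.mem_Ici.2 le_rfl)).hasDerivWithinAt
  have hterm : ∀ t ∈ Finset.Icc 1 (T - 1), HasDerivWithinAt
      (fun ε => if k ≤ t then (Dinfo i0 i xs t - i 0 + i ε)⁻¹ else (Dinfo i0 i xs t)⁻¹)
      (if k ≤ t then -i' / (Dinfo i0 i xs t) ^ 2 else 0) (Set.Ici 0) 0 := by
    intro t ht
    rw [Finset.mem_Icc] at ht
    by_cases hkt : k ≤ t
    · simp only [if_pos hkt]
      have hne : Dinfo i0 i xs t - i 0 + i 0 ≠ 0 := by
        have := hD t ht.2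
        intro h; apply absurd this; rw [show Dinfo i0 i xs t = 0 by linarith]; simp
      have := ((hdi.const_add (Dinfo i0 i xs t - i 0)).inv hne)
      exact this.congr_deriv (by ring)
    · simp only [if_neg hkt]
      exact hasDerivWithinAt_const 0 (Set.Ici 0) _
  have hgderiv : HasDerivWithinAt g (1 - S) (Set.Ici 0) 0 := by
    have hsum := HasDerivWithinAt.sum hterm
    have hlin : HasDerivWithinAt
        (fun ε : ℝ => (∑ t ∈ Finset.Icc 1 (T - 1) \ {k}, xs t) + ε) 1 (Set.Ici 0) 0 :=
      (hasDerivWithinAt_id 0 _).const_add _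
    have htot := hsum.add hlin
    have hSval : (∑ t ∈ Finset.Icc 1 (T - 1),
        (if k ≤ t then -i' / (Dinfo i0 i xs t) ^ 2 else 0)) = -S := by
      rw [hSdef, ← Finset.sum_filter, ← Finset.sum_neg_distrib]
      have hfil : Finset.filter (fun t => k ≤ t) (Finset.Icc 1 (T - 1))
          = Finset.Icc k (T - 1) := by
        ext t
        simp only [Finset.mem_filter, Finset.mem_Icc]
        omega
      rw [hfil]
      apply Finset.sum_congr rfl
      intro t _
      ring
    rw [hSval] at htot
    have : -S + 1 = 1 - S := by ring
    rw [this] at htot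
    exact htot.congr (fun y _ => by rw [hgeq y]; simp [Finset.sum_apply]) (by rw [hgeq 0]; simp [Finset.sum_apply])
  -- g has a local min on Ici 0 at 0
  have hg0 : g 0 = cost T i0 i xs := by
    rw [hgdef]
    simp only
    rw [show (0 : ℝ) = xs k from hzero.symm, Function.update_eq_self]
  have hminOn : IsMinOn g (Set.Ici 0) 0 := by
    intro ε hε
    simp only [Set.mem_Ici] at hε
    simp only [Set.mem_setOf_eq, hg0]
    apply hmin
    intro j hj1 hj2
    by_cases hjk : j = k
    · rw [hjk, Function.update_self]; exact hε
    · rw [Function.update_of_ne hjk]; exact hfeas j hj1 hj2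
  have hcone : (1 : ℝ) ∈ posTangentConeAt (Set.Ici 0) 0 := by
    apply mem_posTangentConeAt_of_segment_subset
    rw [segment_eq_Icc (by norm_num : (0:ℝ) ≤ 0 + 1)]
    intro y hy
    exact hy.1
  have := hminOn.localize.hasFDerivWithinAt_nonneg hgderiv.hasFDerivWithinAt hcone
  simpa using this
end

section
/- Let T ≥ 2 be an integer, i₀ > 0 a real number, and i : ℝ → ℝ a function that is nonnegative and differentiable on [0,∞). Let x* be a minimizer of C over the feasible set and let 1 ≤ k ≤ T−1. If x*_k > 0, then the stationarity (KKT) condition holds: ∑_{t=k}^{T-1} i'(x*_k)/D_t(x*)² = 1. -/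
theorem kkt_stationarity_condition (T : ℕ) (hT : 2 ≤ T) (i0 : ℝ) (hi0 : 0 < i0) (i : ℝ → ℝ)
    (hnonneg : ∀ y, 0 ≤ y → 0 ≤ i y)
    (hdiff : DifferentiableOn ℝ i (Set.Ici 0))
    (xs : ℕ → ℝ) (hfeas : Feasible T xs)
    (hmin : ∀ x, Feasible T x → cost T i0 i xs ≤ cost T i0 i x)
    (k : ℕ) (hk1 : 1 ≤ k) (hk2 : k ≤ T - 1) (hpos : 0 < xs k) :
    ∑ t ∈ Finset.Icc k (T - 1), deriv i (xs k) / (Dinfo i0 i xs t) ^ 2 = 1 := by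
  set y0 := xs k with hy0
  have hDpos : ∀ t, t ≤ T - 1 → 0 < Dinfo i0 i xs t := by
    intro t ht
    have h1 : 0 ≤ ∑ s ∈ Finset.Icc 1 t, i (xs s) := by
      refine Finset.sum_nonneg fun s hs => ?_
      have hs' := Finset.mem_Icc.mp hs
      exact hnonneg _ (hfeas s hs'.1 (le_trans hs'.2 ht))
    unfold Dinfo; linarith
  have hdi : HasDerivAt i (deriv i y0) y0 :=
    (hdiff.differentiableAt (Ici_mem_nhds hpos)).hasDerivAt
  have hkmem : k ∈ Finset.Icc 1 (T - 1) := Finset.mem_Icc.mpr ⟨hk1, hk2⟩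
  -- Dinfo of the updated vector
  have hDup : ∀ y t, Dinfo i0 i (Function.update xs k y) t =
      if k ≤ t then Dinfo i0 i xs t - i (xs k) + i y else Dinfo i0 i xs t := by
    intro y t
    unfold Dinfo
    by_cases h : k ≤ t
    · simp only [if_pos h]
      have hmem : k ∈ Finset.Icc 1 t := Finset.mem_Icc.mpr ⟨hk1, h⟩
      have hcong : ∀ s ∈ Finset.Icc 1 t, i (Function.update xs k y s)
          = Function.update (fun s => i (xs s)) k (i y) s := by
        intro s _
        by_cases hs : s = k
        · subst hs; simp
        · simp [Function.update_of_ne hs]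
      rw [Finset.sum_congr rfl hcong, Finset.sum_update_of_mem hmem,
        ← Finset.add_sum_erase _ (fun s => i (xs s)) hmem]
      simp [Finset.erase_eq]
      ring
    · simp only [if_neg h]
      congr 1
      refine Finset.sum_congr rfl fun s hs => ?_
      have hs' := (Finset.mem_Icc.mp hs).2
      have : s ≠ k := by omega
      rw [Function.update_of_ne this]
  -- cost of the updated vector as an explicit function of y
  set f : ℝ → ℝ := fun y => cost T i0 i (Function.update xs k y) with hf
  have hcost : ∀ y, f y =
      (∑ t ∈ Finset.Icc 1 (T - 1),
        (if k ≤ t then (Dinfo i0 i xs t - i (xs k) + i y)⁻¹ else (Dinfo i0 i xs t)⁻¹))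
      + (y + ∑ t ∈ (Finset.Icc 1 (T - 1)).erase k, xs t) := by
    intro y
    simp only [hf, cost]
    congr 1
    · refine Finset.sum_congr rfl fun t _ => ?_
      rw [hDup]
      split <;> simp [one_div]
    · rw [Finset.sum_update_of_mem hkmem, Finset.erase_eq]
  -- derivative of f at y0
  set d : ℕ → ℝ := fun t => if k ≤ t then -(deriv i y0 / Dinfo i0 i xs t ^ 2) else 0 with hd
  have hderiv : HasDerivAt f ((∑ t ∈ Finset.Icc 1 (T - 1), d t) + 1) y0 := by
    have hfg : f = fun y =>
        (∑ t ∈ Finset.Icc 1 (T - 1),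
          (if k ≤ t then (Dinfo i0 i xs t - i (xs k) + i y)⁻¹ else (Dinfo i0 i xs t)⁻¹))
        + (y + ∑ t ∈ (Finset.Icc 1 (T - 1)).erase k, xs t) := funext hcost
    rw [hfg]
    refine HasDerivAt.add ?_ ((hasDerivAt_id y0).add_const _)
    refine HasDerivAt.fun_sum fun t ht => ?_
    have htle := (Finset.mem_Icc.mp ht).2
    by_cases h : k ≤ t
    · simp only [hd, if_pos h]
      have hne : Dinfo i0 i xs t - i (xs k) + i y0 ≠ 0 := by
        rw [hy0]; have := hDpos t htle; intro hc; apply this.ne'; linarith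
      have hder := (hdi.const_add (Dinfo i0 i xs t - i (xs k))).inv hne
      have heq : Dinfo i0 i xs t - i (xs k) + i y0 = Dinfo i0 i xs t := by rw [hy0]; ring
      rw [heq, neg_div] at hder
      exact hder
    · simp only [hd, if_neg h]
      exact hasDerivAt_const y0 _
  -- local minimum
  have hloc : IsLocalMin f y0 := by
    have hmem : Set.Ioi (0:ℝ) ∈ nhds y0 := Ioi_mem_nhds hpos
    filter_upwards [hmem] with y hy
    have hfeas' : Feasible T (Function.update xs k y) := by
      intro j hj1 hj2
      by_cases hjk : j = k
      · subst hjk; simpa using le_of_lt hy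
      · rw [Function.update_of_ne hjk]; exact hfeas j hj1 hj2
    have h1 : f y0 = cost T i0 i xs := by
      simp only [hf, hy0, Function.update_eq_self]
    rw [h1]
    exact hmin _ hfeas'
  have hzero : (∑ t ∈ Finset.Icc 1 (T - 1), d t) + 1 = 0 :=
    hloc.hasDerivAt_eq_zero hderiv
  -- compute the sum of d
  have hsum : ∑ t ∈ Finset.Icc 1 (T - 1), d t
      = -∑ t ∈ Finset.Icc k (T - 1), deriv i y0 / Dinfo i0 i xs t ^ 2 := by
    rw [← Finset.sum_neg_distrib]
    rw [show Finset.Icc k (T-1) = (Finset.Icc 1 (T-1)).filter (fun t => k ≤ t) by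
      ext t; simp only [Finset.mem_filter, Finset.mem_Icc]; omega]
    rw [Finset.sum_filter]
  rw [hsum] at hzero
  linarith
end
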